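/- Let n ≥ 1 and let A^1, …, A^n be finite simple graphs containing no isolated vertices. Then the product γ_pr(A^1)·γ_pr(A^2)···γ_pr(A^n) is at most 2^(n−1)·(2n − 1)·γ_pr(A^1 □ ⋯ □ A^n). -/

import Mathlib

open SimpleGraph

/-- `D` is a dominating set of `G`: every vertex not in `D` has a neighbor in `D`. -/
def IsDomSet {V : Type*} (G : SimpleGraph V) (D : Finset V) : Prop :=
  ∀ v : V, v ∉ D → ∃ u ∈ D, G.Adj u v

/-- `D` is a paired dominating set of `G`: a dominating set such that the subgraph
of `G` induced by `D` has a perfect matching, i.e. there is a matching subgraph of `G`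
whose vertex set is exactly `D`. -/
def IsPairedDomSet {V : Type*} (G : SimpleGraph V) (D : Finset V) : Prop :=
  IsDomSet G D ∧ ∃ M : G.Subgraph, M.verts = ↑D ∧ M.IsMatching

/-- The paired domination number `γ_pr(G)`. -/
noncomputable def pairedDomNum {V : Type*} [Fintype V] (G : SimpleGraph V) : ℕ :=
  sInf {k : ℕ | ∃ D : Finset V, IsPairedDomSet G D ∧ D.card = k}

/-- The `n`-fold Cartesian (box) product `A^1 □ A^2 □ ⋯ □ A^n` of a family of graphs:
vertices `u` and `v` are adjacent iff there is an index `i` with `(u i, v i)` an edge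
of `A i` and `u j = v j` for all `j ≠ i`. -/
def boxProdPi {n : ℕ} {V : Fin n → Type*} (A : ∀ i, SimpleGraph (V i)) :
    SimpleGraph (∀ i, V i) where
  Adj u v := ∃ i, (A i).Adj (u i) (v i) ∧ ∀ j, j ≠ i → u j = v j
  symm := by
    constructor
    rintro u v ⟨i, hadj, heq⟩
    exact ⟨i, hadj.symm, fun j hj => (heq j hj).symm⟩
  loopless := by
    constructor
    rintro u ⟨i, hadj, -⟩
    exact hadj.ne rfl

namespace PDAux

open Finset

variable {W : Type*} (G : SimpleGraph W)

/-- Endpoint set of a set of pairs. -/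
def VM [DecidableEq W] (M : Finset (W × W)) : Finset W := M.biUnion fun p => {p.1, p.2}

/-- `M` is a set of pairwise disjoint edges of `G`. -/
def GoodM (M : Finset (W × W)) : Prop :=
  (∀ p ∈ M, G.Adj p.1 p.2) ∧
  ∀ p ∈ M, ∀ q ∈ M, p ≠ q → p.1 ≠ q.1 ∧ p.1 ≠ q.2 ∧ p.2 ≠ q.1 ∧ p.2 ≠ q.2

variable [DecidableEq W]

lemma mem_VM {M : Finset (W × W)} {v : W} :
    v ∈ VM M ↔ ∃ p ∈ M, v = p.1 ∨ v = p.2 := by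
  simp only [VM, mem_biUnion, mem_insert, mem_singleton]

lemma VM_mono {M M' : Finset (W × W)} (h : M ⊆ M') : VM M ⊆ VM M' := by
  intro v hv
  rcases mem_VM.mp hv with ⟨p, hp, hvp⟩
  exact mem_VM.mpr ⟨p, h hp, hvp⟩

lemma not_mem_VM {M : Finset (W × W)} {v : W} :
    v ∉ VM M ↔ ∀ p ∈ M, v ≠ p.1 ∧ v ≠ p.2 := by
  rw [mem_VM]; push_neg
  constructor
  · intro h p hp; exact ⟨(h p hp).1, (h p hp).2⟩
  · intro h p hp; exact ⟨(h p hp).1, (h p hp).2⟩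

variable {G}

/-- Two pairs of a good set sharing an endpoint are equal. -/
lemma GoodM.eq_of_share {M : Finset (W × W)} (h : GoodM G M) {p q : W × W}
    (hp : p ∈ M) (hq : q ∈ M)
    (hsh : p.1 = q.1 ∨ p.1 = q.2 ∨ p.2 = q.1 ∨ p.2 = q.2) : p = q := by
  by_contra hne
  obtain ⟨h1, h2, h3, h4⟩ := h.2 p hp q hq hne
  tauto

lemma goodM_empty : GoodM G (∅ : Finset (W × W)) := by
  constructor <;> intro p hp <;> simp at hp

lemma goodM_insert {M : Finset (W × W)} (h : GoodM G M) {a b : W}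
    (hab : G.Adj a b) (ha : a ∉ VM M) (hb : b ∉ VM M) :
    GoodM G (insert (a, b) M) := by
  constructor
  · intro p hp
    rcases mem_insert.mp hp with h1 | h1
    · subst h1; exact hab
    · exact h.1 p h1
  · intro p hp q hq hpq
    rcases mem_insert.mp hp with h1 | h1 <;> rcases mem_insert.mp hq with h2 | h2
    · exact absurd (h1.trans h2.symm) hpq
    · subst h1
      obtain ⟨ha1, ha2⟩ := (not_mem_VM.mp ha) q h2
      obtain ⟨hb1, hb2⟩ := (not_mem_VM.mp hb) q h2
      exact ⟨ha1, ha2, hb1, hb2⟩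
    · subst h2
      obtain ⟨ha1, ha2⟩ := (not_mem_VM.mp ha) p h1
      obtain ⟨hb1, hb2⟩ := (not_mem_VM.mp hb) p h1
      exact ⟨ha1.symm, hb1.symm, ha2.symm, hb2.symm⟩
    · exact h.2 p h1 q h2 hpq

lemma mem_VM_insert {M : Finset (W × W)} {a b v : W} :
    v ∈ VM (insert (a, b) M) ↔ v = a ∨ v = b ∨ v ∈ VM M := by
  simp only [VM, mem_biUnion, mem_insert, mem_singleton]
  constructor
  · rintro ⟨p, hp | hp, hv⟩
    · subst hp; tauto
    · right; right; exact ⟨p, hp, hv⟩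
  · rintro (h | h | ⟨p, hp, hv⟩)
    · exact ⟨(a, b), Or.inl rfl, Or.inl h⟩
    · exact ⟨(a, b), Or.inl rfl, Or.inr h⟩
    · exact ⟨p, Or.inr hp, hv⟩

lemma card_VM {M : Finset (W × W)} (h : GoodM G M) : (VM M).card = 2 * M.card := by
  rw [VM, card_biUnion]
  · rw [Finset.sum_congr rfl (fun p hp => ?_), Finset.sum_const, smul_eq_mul, mul_comm]
    rw [card_insert_of_notMem (by simp [(h.1 p hp).ne]), card_singleton]
  · intro p hp q hq hpq
    obtain ⟨h1, h2, h3, h4⟩ := h.2 p hp q hq hpq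
    simp only [Function.onFun]
    rw [Finset.disjoint_left]
    intro a hap haq
    simp only [mem_insert, mem_singleton] at hap haq
    rcases hap with rfl | rfl <;> rcases haq with he | he <;> tauto

/-- From a good pair set whose endpoints dominate, we get a paired dominating set. -/
lemma pds_VM {M : Finset (W × W)} (h : GoodM G M) (hdom : IsDomSet G (VM M)) :
    IsPairedDomSet G (VM M) := by
  refine ⟨hdom, ?_⟩
  refine ⟨{ verts := ↑(VM M),
            Adj := fun a b => (a, b) ∈ M ∨ (b, a) ∈ M,
            adj_sub := ?_, edge_vert := ?_, symm := ?_ }, rfl, ?_⟩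
  · rintro v w (hm | hm)
    · exact h.1 _ hm
    · exact (h.1 _ hm).symm
  · rintro v w (hm | hm)
    · exact Finset.mem_coe.mpr (mem_VM.mpr ⟨(v, w), hm, Or.inl rfl⟩)
    · exact Finset.mem_coe.mpr (mem_VM.mpr ⟨(w, v), hm, Or.inr rfl⟩)
  · constructor; intro a b hab; tauto
  · intro v hv
    simp only [Finset.mem_coe] at hv
    rcases mem_VM.mp hv with ⟨p, hp, hvp | hvp⟩
    · subst hvp
      refine ⟨p.2, Or.inl hp, ?_⟩
      rintro y (hy | hy)
      · exact congrArg Prod.snd (h.eq_of_share hy hp (Or.inl rfl))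
      · have he := h.eq_of_share hy hp (Or.inr (Or.inr (Or.inl rfl)))
        have h22 : p.1 = p.2 := congrArg Prod.snd he
        exact absurd h22 (h.1 p hp).ne
    · subst hvp
      refine ⟨p.1, Or.inr hp, ?_⟩
      rintro y (hy | hy)
      · have he := h.eq_of_share hy hp (Or.inr (Or.inl rfl))
        have h21 : p.2 = p.1 := congrArg Prod.fst he
        exact absurd h21.symm (h.1 p hp).ne
      · exact congrArg Prod.fst (h.eq_of_share hy hp (Or.inr (Or.inr (Or.inr rfl))))

/-- Greedy extension of a matching over a vertex set `X`: afterwards, every `x ∈ X`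
is matched or all its neighbours are matched. -/
lemma extend (G : SimpleGraph W) (X : Finset W) (M0 : Finset (W × W)) (h0 : GoodM G M0) :
    ∃ M, GoodM G M ∧ M0 ⊆ M ∧ M.card ≤ M0.card + (X \ VM M0).card ∧
      ∀ x ∈ X, x ∈ VM M ∨ ∀ y, G.Adj x y → y ∈ VM M := by
  classical
  induction X using Finset.induction with
  | empty => exact ⟨M0, h0, Finset.Subset.refl _, by simp, by simp⟩
  | @insert x X' hxX ih =>
    obtain ⟨M, hM, hM0, hcard, hall⟩ := ih
    have hmono : ∀ z ∈ X', z ∈ VM M ∨ ∀ y, G.Adj z y → y ∈ VM M := hall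
    by_cases hx : x ∈ VM M
    · refine ⟨M, hM, hM0, le_trans hcard ?_, ?_⟩
      · exact Nat.add_le_add_left (Finset.card_le_card (by
          intro a ha; rw [Finset.mem_sdiff] at ha ⊢
          exact ⟨Finset.mem_insert_of_mem ha.1, ha.2⟩)) _
      · intro z hz
        rcases Finset.mem_insert.mp hz with rfl | hz'
        · exact Or.inl hx
        · exact hall z hz'
    · by_cases hy : ∃ y, G.Adj x y ∧ y ∉ VM M
      · obtain ⟨y, hxy, hyM⟩ := hy
        refine ⟨insert (x, y) M, goodM_insert hM hxy hx hyM, 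
          Finset.Subset.trans hM0 (Finset.subset_insert _ _), ?_, ?_⟩
        · have hxn : x ∉ VM M0 := fun hc => hx (VM_mono hM0 hc)
          have h1 : (insert x X' \ VM M0) = insert x (X' \ VM M0) := by
            ext a
            simp only [Finset.mem_sdiff, Finset.mem_insert]
            constructor
            · rintro ⟨rfl | ha, hb⟩
              · exact Or.inl rfl
              · exact Or.inr ⟨ha, hb⟩
            · rintro (rfl | ⟨ha, hb⟩)
              · exact ⟨Or.inl rfl, hxn⟩
              · exact ⟨Or.inr ha, hb⟩
          have h2 : x ∉ X' \ VM M0 := fun hc => hxX (Finset.mem_sdiff.mp hc).1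
          rw [h1, Finset.card_insert_of_notMem h2]
          calc (insert (x, y) M).card ≤ M.card + 1 := Finset.card_insert_le _ _
            _ ≤ M0.card + (X' \ VM M0).card + 1 := Nat.add_le_add_right hcard 1
            _ = M0.card + ((X' \ VM M0).card + 1) := by ring
        · intro z hz
          rcases Finset.mem_insert.mp hz with rfl | hz'
          · exact Or.inl (mem_VM_insert.mpr (Or.inl rfl))
          · rcases hall z hz' with h | h
            · exact Or.inl (mem_VM_insert.mpr (Or.inr (Or.inr h)))
            · exact Or.inr fun w hw => mem_VM_insert.mpr (Or.inr (Or.inr (h w hw)))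
      · push_neg at hy
        refine ⟨M, hM, hM0, le_trans hcard (Nat.add_le_add_left (Finset.card_le_card (by
          intro a ha; rw [Finset.mem_sdiff] at ha ⊢
          exact ⟨Finset.mem_insert_of_mem ha.1, ha.2⟩)) _), ?_⟩
        intro z hz
        rcases Finset.mem_insert.mp hz with rfl | hz'
        · exact Or.inr fun w hw => hy w hw
        · exact hall z hz'

/-- The endpoints of the extended matching form a paired dominating set. -/
lemma engine [Fintype W] (G : SimpleGraph W) (hni : ∀ v : W, ∃ u, G.Adj u v)
    (X : Finset W) (hX : IsDomSet G X) (M0 : Finset (W × W)) (h0 : GoodM G M0) :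
    pairedDomNum G ≤ 2 * M0.card + 2 * (X \ VM M0).card := by
  classical
  obtain ⟨M, hM, hM0, hcard, hall⟩ := extend G X M0 h0
  have hdom : IsDomSet G (VM M) := by
    intro v hv
    by_cases hvX : v ∈ X
    · rcases hall v hvX with h | h
      · exact absurd h hv
      · obtain ⟨u, hu⟩ := hni v
        exact ⟨u, h u hu.symm, hu⟩
    · obtain ⟨u, huX, huv⟩ := hX v hvX
      rcases hall u huX with h | h
      · exact ⟨u, h, huv⟩
      · exact absurd (h v huv) hv
  have hpds := pds_VM hM hdom
  calc pairedDomNum G ≤ (VM M).card := Nat.sInf_le ⟨VM M, hpds, rfl⟩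
    _ = 2 * M.card := card_VM hM
    _ ≤ 2 * (M0.card + (X \ VM M0).card) := Nat.mul_le_mul_left 2 hcard
    _ = 2 * M0.card + 2 * (X \ VM M0).card := by ring

lemma exists_pds [Fintype W] (G : SimpleGraph W) (hni : ∀ v : W, ∃ u, G.Adj u v) :
    ∃ D : Finset W, IsPairedDomSet G D := by
  classical
  obtain ⟨M, hM, -, -, hall⟩ := extend G Finset.univ (∅ : Finset (W × W)) goodM_empty
  refine ⟨VM M, pds_VM hM ?_⟩
  intro v hv
  rcases hall v (Finset.mem_univ v) with h | h
  · exact absurd h hv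
  · obtain ⟨u, hu⟩ := hni v
    exact ⟨u, h u hu.symm, hu⟩

lemma pdn_mem [Fintype W] (G : SimpleGraph W) (hni : ∀ v : W, ∃ u, G.Adj u v) :
    ∃ D : Finset W, IsPairedDomSet G D ∧ D.card = pairedDomNum G := by
  obtain ⟨D0, hD0⟩ := exists_pds G hni
  have : pairedDomNum G ∈ {k : ℕ | ∃ D : Finset W, IsPairedDomSet G D ∧ D.card = k} :=
    Nat.sInf_mem ⟨D0.card, D0, hD0, rfl⟩
  exact this

/-- Greedy maximal sub-matching of a candidate edge set, extending `M0`. -/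
lemma greedy (G : SimpleGraph W) (C : Finset (W × W)) (hC : ∀ e ∈ C, G.Adj e.1 e.2)
    (M0 : Finset (W × W)) (h0 : GoodM G M0) :
    ∃ M, GoodM G M ∧ M0 ⊆ M ∧ M \ M0 ⊆ C ∧ ∀ e ∈ C, e.1 ∈ VM M ∨ e.2 ∈ VM M := by
  classical
  induction C using Finset.induction with
  | empty => exact ⟨M0, h0, Finset.Subset.refl _, by simp, by simp⟩
  | @insert e C' hxC ih =>
    obtain ⟨M, hM, hM0, hsub, hmax⟩ := ih (fun f hf => hC f (Finset.mem_insert_of_mem hf))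
    have hCe : G.Adj e.1 e.2 := hC e (Finset.mem_insert_self _ _)
    by_cases h1 : e.1 ∈ VM M ∨ e.2 ∈ VM M
    · refine ⟨M, hM, hM0, Finset.Subset.trans hsub (Finset.subset_insert _ _), ?_⟩
      intro f hf
      rcases Finset.mem_insert.mp hf with rfl | hf'
      · exact h1
      · exact hmax f hf'
    · push_neg at h1
      have hM' : GoodM G (insert (e.1, e.2) M) := goodM_insert hM hCe h1.1 h1.2
      have he : (e.1, e.2) = e := rfl
      rw [he] at hM'
      refine ⟨insert e M, hM', Finset.Subset.trans hM0 (Finset.subset_insert _ _), ?_, ?_⟩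
      · intro f hf
        rw [Finset.mem_sdiff, Finset.mem_insert] at hf
        rcases hf.1 with rfl | hf'
        · exact Finset.mem_insert_self _ _
        · exact Finset.mem_insert_of_mem (hsub (Finset.mem_sdiff.mpr ⟨hf', hf.2⟩))
      · intro f hf
        rcases Finset.mem_insert.mp hf with rfl | hf'
        · left
          have : f.1 ∈ VM (insert (f.1, f.2) M) := mem_VM_insert.mpr (Or.inl rfl)
          simpa using this
        · rcases hmax f hf' with h | h
          · exact Or.inl (VM_mono (Finset.subset_insert _ _) h)
          · exact Or.inr (VM_mono (Finset.subset_insert _ _) h)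

/-- If a finite set is closed under a fixed-point-free involution compatible with `f`,
the image under `f` is at most half the size. -/
lemma two_mul_image_le {α β : Type*} [DecidableEq α] [DecidableEq β]
    (S : Finset α) (m : α → α) (f : α → β)
    (hcl : ∀ x ∈ S, m x ∈ S) (hne : ∀ x ∈ S, m x ≠ x) (hf : ∀ x ∈ S, f (m x) = f x) :
    2 * (S.image f).card ≤ S.card := by
  rw [Finset.card_eq_sum_card_fiberwise (fun x hx => Finset.mem_image_of_mem f hx)]
  have h2 : ∀ b ∈ S.image f, 2 ≤ (S.filter (fun a => f a = b)).card := by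
    intro b hb
    obtain ⟨x, hx, hfx⟩ := Finset.mem_image.mp hb
    have hsub : ({x, m x} : Finset α) ⊆ S.filter (fun a => f a = b) := by
      intro a ha
      rcases Finset.mem_insert.mp ha with rfl | ha'
      · exact Finset.mem_filter.mpr ⟨hx, hfx⟩
      · rw [Finset.mem_singleton] at ha'
        subst ha'
        exact Finset.mem_filter.mpr ⟨hcl x hx, (hf x hx).trans hfx⟩
    calc 2 = ({x, m x} : Finset α).card := by
            rw [Finset.card_insert_of_notMem (by simp [(hne x hx).symm, Ne.symm]), 
              Finset.card_singleton]
      _ ≤ _ := Finset.card_le_card hsub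
  calc 2 * (S.image f).card = ∑ _b ∈ S.image f, 2 := by
        rw [Finset.sum_const, smul_eq_mul, mul_comm]
    _ ≤ _ := Finset.sum_le_sum h2

/-- A set closed under a fixed-point-free involution has size twice the number of
"lower" representatives. -/
lemma card_eq_two_mul_filter {α : Type*} [DecidableEq α]
    (S : Finset α) (m : α → α) (g : α → ℕ) (hg : Function.Injective g)
    (hcl : ∀ x ∈ S, m x ∈ S) (hne : ∀ x ∈ S, m x ≠ x) (hinv : ∀ x ∈ S, m (m x) = x) :
    S.card = 2 * (S.filter (fun x => g x < g (m x))).card := by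
  classical
  set R := S.filter (fun x => g x < g (m x)) with hR
  have hneg : S.filter (fun x => ¬ g x < g (m x)) = R.image m := by
    ext y
    simp only [Finset.mem_filter, Finset.mem_image, hR]
    constructor
    · rintro ⟨hyS, hylt⟩
      have hmy : m y ∈ S := hcl y hyS
      have : g (m y) ≠ g y := fun hc => hne y hyS (hg hc)
      have hlt : g (m y) < g y := by omega
      refine ⟨m y, ⟨hmy, ?_⟩, hinv y hyS⟩
      rw [hinv y hyS]; exact hlt
    · rintro ⟨r, ⟨hr1, hr2⟩, rfl⟩
      refine ⟨hcl r hr1, ?_⟩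
      rw [hinv r hr1]
      omega
  have hinj : Set.InjOn m ↑R := by
    intro a ha b hb hab
    have haS : a ∈ S := (Finset.mem_filter.mp ha).1
    have hbS : b ∈ S := (Finset.mem_filter.mp hb).1
    rw [← hinv a haS, hab, hinv b hbS]
  have key : R.card + (R.image m).card = S.card := by
    rw [← hneg, hR]
    exact Finset.card_filter_add_card_filter_not (p := fun x => g x < g (m x))
  rw [Finset.card_image_of_injOn hinj] at key
  omega

/-- A partner (matching) function for a paired dominating set. -/
lemma partner (G : SimpleGraph W) (D : Finset W) (h : IsPairedDomSet G D) :
    ∃ m : W → W, (∀ d ∈ D, m d ∈ D) ∧ (∀ d ∈ D, G.Adj d (m d)) ∧ (∀ d ∈ D, m (m d) = d) := by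
  classical
  obtain ⟨M, hMv, hMm⟩ := h.2
  have hDmem : ∀ d ∈ D, ∃! w, M.Adj d w := by
    intro d hd
    exact hMm (by rw [hMv]; exact_mod_cast hd)
  set m : W → W := fun d => if hd : d ∈ D then (hDmem d hd).choose else d with hmdef
  have hadjM : ∀ d, ∀ hd : d ∈ D, M.Adj d (m d) := by
    intro d hd
    simp only [hmdef, dif_pos hd]
    exact (hDmem d hd).choose_spec.1
  have huniq : ∀ d, ∀ hd : d ∈ D, ∀ y, M.Adj d y → y = m d := by
    intro d hd y hy
    simp only [hmdef, dif_pos hd]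
    exact (hDmem d hd).choose_spec.2 y hy
  have hmem : ∀ d ∈ D, m d ∈ D := by
    intro d hd
    have h2 := M.edge_vert (hadjM d hd).symm
    rw [hMv] at h2
    exact_mod_cast h2
  refine ⟨m, hmem, fun d hd => M.adj_sub (hadjM d hd), ?_⟩
  intro d hd
  exact (huniq (m d) (hmem d hd) d (hadjM d hd).symm).symm

end PDAux

/-- `γ_pr(A^1)···γ_pr(A^n) ≤ 2^(n-1)·(2n-1)·γ_pr(A^1 □ ⋯ □ A^n)` for graphs without
isolated vertices. -/
theorem prod_pairedDomNum_le_mul_pairedDomNum_boxProdPi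
    {n : ℕ} (hn : 1 ≤ n) {V : Fin n → Type*} [∀ i, Fintype (V i)]
    (A : ∀ i, SimpleGraph (V i))
    (hA : ∀ i, ∀ v : V i, ∃ u : V i, (A i).Adj u v) :
    ∏ i, pairedDomNum (A i) ≤ 2 ^ (n - 1) * (2 * n - 1) * pairedDomNum (boxProdPi A) := by
  classical
  by_cases hvne : ∀ i, Nonempty (V i)
  case neg =>
    push_neg at hvne
    obtain ⟨i0, hi0⟩ := hvne
    have hz0 : pairedDomNum (A i0) = 0 := by
      have h0 : (0:ℕ) ∈ {k : ℕ | ∃ D : Finset (V i0), IsPairedDomSet (A i0) D ∧ D.card = k} := by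
        refine ⟨∅, ⟨?_, ⟨⊥, by simp, ?_⟩⟩, rfl⟩
        · intro v _; exact (IsEmpty.false v).elim
        · intro v hv; simp at hv
      exact Nat.le_zero.mp (Nat.sInf_le h0)
    calc ∏ i, pairedDomNum (A i) = 0 := Finset.prod_eq_zero (Finset.mem_univ i0) hz0
      _ ≤ _ := Nat.zero_le _
  case pos =>
  haveI : ∀ i, Nonempty (V i) := hvne
  set z : Fin n := ⟨0, hn⟩ with hzdef
  have hPadj : ∀ x y : (∀ i, V i), (boxProdPi A).Adj x y ↔
      ∃ i, (A i).Adj (x i) (y i) ∧ ∀ j, j ≠ i → x j = y j := fun x y => Iff.rfl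
  have hPni : ∀ u : (∀ i, V i), ∃ w, (boxProdPi A).Adj w u := by
    intro u
    obtain ⟨g, hg⟩ := hA z (u z)
    refine ⟨Function.update u z g, (hPadj _ _).mpr ⟨z, ?_, ?_⟩⟩
    · rw [Function.update_self]; exact hg
    · intro j hj; rw [Function.update_of_ne hj]
  obtain ⟨D, hD, hDcard⟩ := PDAux.pdn_mem (boxProdPi A) hPni
  -- partner machinery on D
  obtain ⟨mu, hmu_mem, hmu_adj, hmu_invol⟩ := PDAux.partner (boxProdPi A) D hD
  have hmu_ne : ∀ d ∈ D, mu d ≠ d := fun d hd => (hmu_adj d hd).ne'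
  have hdiff : ∀ d ∈ D, ∃ i, (A i).Adj (d i) (mu d i) ∧ ∀ j, j ≠ i → d j = mu d j :=
    fun d hd => (hPadj _ _).mp (hmu_adj d hd)
  set sig : (∀ i, V i) → Fin n := fun d => if h : d ∈ D then (hdiff d h).choose else z
    with hsigdef
  have hsig_adj : ∀ d, ∀ hd : d ∈ D, (A (sig d)).Adj (d (sig d)) (mu d (sig d)) := by
    intro d hd
    rw [hsigdef]
    beta_reduce
    rw [dif_pos hd]
    exact (hdiff d hd).choose_spec.1
  have hsig_eq : ∀ d, ∀ hd : d ∈ D, ∀ j, j ≠ sig d → d j = mu d j := by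
    intro d hd
    rw [hsigdef]
    beta_reduce
    rw [dif_pos hd]
    exact (hdiff d hd).choose_spec.2
  have hsig_mu : ∀ d ∈ D, sig (mu d) = sig d := by
    intro d hd
    by_contra hne
    have h1 := hsig_adj (mu d) (hmu_mem d hd)
    have h2 := hsig_eq d hd (sig (mu d)) (Ne.symm (by exact fun h => hne h.symm))
    rw [hmu_invol d hd, ← h2] at h1
    exact (A _).loopless.irrefl _ h1
  -- per-factor minimal PDS, pairings, representatives
  have hSex : ∀ i, ∃ Si : Finset (V i), IsPairedDomSet (A i) Si ∧ Si.card = pairedDomNum (A i) :=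
    fun i => PDAux.pdn_mem (A i) (hA i)
  choose S hS hScard using hSex
  have hmuSex : ∀ i, ∃ m : V i → V i, (∀ d ∈ S i, m d ∈ S i) ∧
      (∀ d ∈ S i, (A i).Adj d (m d)) ∧ (∀ d ∈ S i, m (m d) = d) :=
    fun i => PDAux.partner (A i) (S i) (hS i)
  choose muS hmuS_mem hmuS_adj hmuS_invol using hmuSex
  have hmuS_ne : ∀ i, ∀ x ∈ S i, muS i x ≠ x := fun i x hx => (hmuS_adj i x hx).ne'
  set gnum : ∀ i, V i → ℕ := fun i w => (Fintype.equivFin (V i) w).val with hgnumdef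
  have hgnum_inj : ∀ i, Function.Injective (gnum i) := by
    intro i a b hab
    exact (Fintype.equivFin (V i)).injective (Fin.val_injective hab)
  set R : ∀ i, Finset (V i) := fun i => (S i).filter (fun x => gnum i x < gnum i (muS i x))
    with hRdef
  have hcard2 : ∀ i, (S i).card = 2 * (R i).card := fun i =>
    PDAux.card_eq_two_mul_filter (S i) (muS i) (gnum i) (hgnum_inj i)
      (hmuS_mem i) (hmuS_ne i) (hmuS_invol i)
  have hR_sub : ∀ i, R i ⊆ S i := fun i => Finset.filter_subset _ _
  have hmuR_not : ∀ i, ∀ r ∈ R i, muS i r ∉ R i := by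
    intro i r hr hmr
    have h1 := (Finset.mem_filter.mp hr).2
    have h2 := (Finset.mem_filter.mp hmr).2
    rw [hmuS_invol i r (hR_sub i hr)] at h2
    omega
  -- block assignment
  have hsfun_ex : ∀ i, ∀ w : V i, ∃ u ∈ S i, w = u ∨ (A i).Adj u w := by
    intro i w
    by_cases hw : w ∈ S i
    · exact ⟨w, hw, Or.inl rfl⟩
    · obtain ⟨u, hu, hadj⟩ := (hS i).1 w hw
      exact ⟨u, hu, Or.inr hadj⟩
  choose sfun hsfun_mem hsfun_cov using hsfun_ex
  set br : ∀ i, V i → V i := fun i w =>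
    if gnum i (sfun i w) < gnum i (muS i (sfun i w)) then sfun i w else muS i (sfun i w)
    with hbrdef
  have hbr_mem : ∀ i, ∀ w, br i w ∈ R i := by
    intro i w
    by_cases h : gnum i (sfun i w) < gnum i (muS i (sfun i w))
    · simp only [hbrdef, if_pos h]
      exact Finset.mem_filter.mpr ⟨hsfun_mem i w, h⟩
    · simp only [hbrdef, if_neg h]
      have hmem := hmuS_mem i _ (hsfun_mem i w)
      refine Finset.mem_filter.mpr ⟨hmem, ?_⟩
      rw [hmuS_invol i _ (hsfun_mem i w)]
      have hne : gnum i (sfun i w) ≠ gnum i (muS i (sfun i w)) :=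
        fun hc => hmuS_ne i _ (hsfun_mem i w) (hgnum_inj i hc.symm)
      omega
  have hbr_cov : ∀ i, ∀ w : V i, w = br i w ∨ w = muS i (br i w) ∨
      (A i).Adj (br i w) w ∨ (A i).Adj (muS i (br i w)) w := by
    intro i w
    by_cases h : gnum i (sfun i w) < gnum i (muS i (sfun i w))
    · simp only [hbrdef, if_pos h]
      rcases hsfun_cov i w with h1 | h1
      · exact Or.inl h1
      · exact Or.inr (Or.inr (Or.inl h1))
    · simp only [hbrdef, if_neg h]
      rw [hmuS_invol i _ (hsfun_mem i w)]
      rcases hsfun_cov i w with h1 | h1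
      · exact Or.inr (Or.inl h1)
      · exact Or.inr (Or.inr (Or.inr h1))
  -- cells
  set pt : ∀ i, V i := fun i => Classical.arbitrary (V i) with hptdef
  set Rz : ∀ j, Finset (V j) := fun j => if j = z then {pt j} else R j with hRzdef
  set cells : Finset (∀ j, V j) := Fintype.piFinset Rz with hcellsdef
  set cellOf : (∀ j, V j) → (∀ j, V j) := fun d j => if j = z then pt j else br j (d j)
    with hcellOfdef
  have hcellOf_mem : ∀ d, cellOf d ∈ cells := by
    intro d
    rw [hcellsdef, Fintype.mem_piFinset]
    intro j
    by_cases hj : j = z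
    · simp only [hcellOfdef, hRzdef, if_pos hj]; exact Finset.mem_singleton_self _
    · simp only [hcellOfdef, hRzdef, if_neg hj]; exact hbr_mem j (d j)
  set c0 : ∀ j, V j := cellOf pt with hc0def
  set nrm : Fin n → (∀ j, V j) → (∀ j, V j) := fun i c => Function.update c i (c0 i)
    with hnrmdef
  have hnrm_mem : ∀ i, ∀ c ∈ cells, nrm i c ∈ cells := by
    intro i c hc
    rw [hcellsdef, Fintype.mem_piFinset]
    intro j
    by_cases hj : j = i
    · subst hj
      simp only [hnrmdef, Function.update_self]
      have := hcellOf_mem pt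
      rw [hcellsdef, Fintype.mem_piFinset] at this
      exact this j
    · simp only [hnrmdef, Function.update_of_ne hj]
      rw [hcellsdef, Fintype.mem_piFinset] at hc
      exact hc j
  have hnrm_at : ∀ (i : Fin n) (c : ∀ j, V j) (j : Fin n), j ≠ i → nrm i c j = c j := by
    intro i c j hj
    simp only [hnrmdef, Function.update_of_ne hj]
  set ctxOf : Fin n → (∀ j, V j) → ((∀ j, V j) × V z) := fun i d => (nrm i (cellOf d), d z)
    with hctxOfdef
  set L : (∀ j, V j) → Finset (V z) := fun c =>
    Finset.univ.filter (fun v => ¬ ∃ d ∈ D, cellOf d = c ∧ ((A z).Adj (d z) v ∨ d z = v))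
    with hLdef
  set fullSet : ∀ (i : Fin n), (∀ j, V j) → V z → Finset (V i) := fun i κ v =>
    (R i).filter (fun r => ∀ w : V i, br i w = r →
      ∃ d ∈ D, ctxOf i d = (κ, v) ∧ (A i).Adj (d i) w)
    with hfulldef
  -- helper unfolding lemmas
  have hcellOf_at : ∀ d j, cellOf d j = if j = z then pt j else br j (d j) := fun d j => by
    rw [hcellOfdef]
  have hLmem : ∀ c (v : V z), v ∈ L c ↔
      ¬ ∃ d ∈ D, cellOf d = c ∧ ((A z).Adj (d z) v ∨ d z = v) := by
    intro c v
    simp only [hLdef, Finset.mem_filter, Finset.mem_univ, true_and]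
  have hfullmem : ∀ (i : Fin n) κ (v : V z) (r : V i), r ∈ fullSet i κ v ↔
      r ∈ R i ∧ ∀ w : V i, br i w = r →
        ∃ d ∈ D, ctxOf i d = (κ, v) ∧ (A i).Adj (d i) w := by
    intro i κ v r
    simp only [hfulldef, Finset.mem_filter]
  -- Count 1 : per-cell bound on the paired domination number of the special factor
  have count1 : ∀ c, pairedDomNum (A z) ≤
      2 * ((D.filter (fun d => ¬ sig d = z)).filter (fun d => cellOf d = c)).card
      + ((D.filter (fun d => sig d = z)).filter (fun d => cellOf d = c)).card
      + 2 * (L c).card := by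
    intro c
    set DT := D.filter (fun d => cellOf d = c) with hDT
    set DTz := (D.filter (fun d => sig d = z)).filter (fun d => cellOf d = c) with hDTzd
    set DTnz := (D.filter (fun d => ¬ sig d = z)).filter (fun d => cellOf d = c) with hDTnzd
    set projz : Finset (V z) := DTz.image (fun d => d z) with hprojzd
    set projnz : Finset (V z) := DTnz.image (fun d => d z) with hprojnzd
    set pairord : (∀ j, V j) → V z × V z := fun d =>
      if gnum z (d z) < gnum z (mu d z) then (d z, mu d z) else (mu d z, d z) with hpairord
    set C : Finset (V z × V z) := DTz.image pairord with hCd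
    have hDTzmem : ∀ d, d ∈ DTz ↔ d ∈ D ∧ sig d = z ∧ cellOf d = c := by
      intro d; simp only [hDTzd, Finset.mem_filter]; tauto
    have hDTnzmem : ∀ d, d ∈ DTnz ↔ d ∈ D ∧ ¬ sig d = z ∧ cellOf d = c := by
      intro d; simp only [hDTnzd, Finset.mem_filter]; tauto
    have hend : ∀ d, d z ∈ ({(pairord d).1, (pairord d).2} : Finset (V z)) := by
      intro d
      by_cases hlt : gnum z (d z) < gnum z (mu d z)
      · simp only [hpairord, if_pos hlt]; exact Finset.mem_insert_self _ _
      · simp only [hpairord, if_neg hlt]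
        exact Finset.mem_insert_of_mem (Finset.mem_singleton_self _)
    have hCadj : ∀ e ∈ C, (A z).Adj e.1 e.2 := by
      intro e he
      obtain ⟨d, hd, rfl⟩ := Finset.mem_image.mp he
      obtain ⟨hdD, hsz, -⟩ := (hDTzmem d).mp hd
      have hadj : (A z).Adj (d z) (mu d z) := by
        have := hsig_adj d hdD; rw [hsz] at this; exact this
      by_cases hlt : gnum z (d z) < gnum z (mu d z)
      · simp only [hpairord, if_pos hlt]; exact hadj
      · simp only [hpairord, if_neg hlt]; exact hadj.symm
    obtain ⟨M, hM, -, hMC, hMmax⟩ := PDAux.greedy (A z) C hCadj ∅ PDAux.goodM_empty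
    rw [Finset.sdiff_empty] at hMC
    set X : Finset (V z) := (DT.image (fun d => d z)) ∪ L c with hXd
    have hXdom : IsDomSet (A z) X := by
      intro v hv
      have hvL : v ∉ L c := fun hc => hv (Finset.mem_union_right _ hc)
      rw [hLmem, not_not] at hvL
      obtain ⟨d, hdD, hcell, hcase⟩ := hvL
      have hdDT : d ∈ DT := Finset.mem_filter.mpr ⟨hdD, hcell⟩
      rcases hcase with hadj | heq
      · exact ⟨d z, Finset.mem_union_left _ (Finset.mem_image_of_mem _ hdDT), hadj⟩
      · exact absurd (Finset.mem_union_left _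
          (Finset.mem_image.mpr ⟨d, hdDT, heq⟩)) hv
    have hengine := PDAux.engine (A z) (hA z) X hXdom M hM
    have h2C : 2 * C.card ≤ DTz.card := by
      refine PDAux.two_mul_image_le DTz mu pairord ?_ ?_ ?_
      · intro d hd
        obtain ⟨hdD, hsz, hcell⟩ := (hDTzmem d).mp hd
        refine (hDTzmem (mu d)).mpr ⟨hmu_mem d hdD, ?_, ?_⟩
        · rw [hsig_mu d hdD, hsz]
        · rw [← hcell]
          funext j
          by_cases hj : j = z
          · subst hj; rw [hcellOf_at, hcellOf_at, if_pos rfl, if_pos rfl]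
          · rw [hcellOf_at, hcellOf_at, if_neg hj, if_neg hj,
              ← hsig_eq d hdD j (by rw [hsz]; exact hj)]
      · intro d hd; exact hmu_ne d ((hDTzmem d).mp hd).1
      · intro d hd
        obtain ⟨hdD, hsz, -⟩ := (hDTzmem d).mp hd
        have hinv := hmu_invol d hdD
        have hne : gnum z (d z) ≠ gnum z (mu d z) := by
          intro hc
          have hadj : (A z).Adj (d z) (mu d z) := by
            have := hsig_adj d hdD; rw [hsz] at this; exact this
          exact hadj.ne (hgnum_inj z hc)
        simp only [hpairord]
        rw [hinv]
        split_ifs with h1 h2 h3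
        · exfalso; omega
        · rfl
        · rfl
        · exfalso; omega
    have hprojz_sub : projz \ PDAux.VM M ⊆
        (C \ M).biUnion (fun e => ({e.1, e.2} : Finset (V z)) \ PDAux.VM M) := by
      intro a ha
      rw [Finset.mem_sdiff] at ha
      obtain ⟨haproj, haVM⟩ := ha
      obtain ⟨d, hd, rfl⟩ := Finset.mem_image.mp haproj
      have heC : pairord d ∈ C := Finset.mem_image_of_mem _ hd
      have heM : pairord d ∉ M := by
        intro hc
        refine haVM (PDAux.mem_VM.mpr ⟨pairord d, hc, ?_⟩)
        rcases Finset.mem_insert.mp (hend d) with h | h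
        · exact Or.inl h
        · exact Or.inr (Finset.mem_singleton.mp h)
      exact Finset.mem_biUnion.mpr ⟨pairord d, Finset.mem_sdiff.mpr ⟨heC, heM⟩,
        Finset.mem_sdiff.mpr ⟨hend d, haVM⟩⟩
    have hprojz_card : (projz \ PDAux.VM M).card ≤ (C \ M).card := by
      have hper : ∀ e ∈ C \ M, (({e.1, e.2} : Finset (V z)) \ PDAux.VM M).card ≤ 1 := by
        intro e he
        rcases hMmax e (Finset.mem_sdiff.mp he).1 with h | h
        · refine le_trans (Finset.card_le_card (fun a ha => ?_)) (Finset.card_singleton e.2).le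
          rw [Finset.mem_sdiff] at ha
          rcases Finset.mem_insert.mp ha.1 with h1 | h1
          · exact absurd (h1 ▸ h) ha.2
          · exact h1
        · refine le_trans (Finset.card_le_card (fun a ha => ?_)) (Finset.card_singleton e.1).le
          rw [Finset.mem_sdiff] at ha
          rcases Finset.mem_insert.mp ha.1 with h1 | h1
          · exact Finset.mem_singleton.mpr h1
          · exact absurd ((Finset.mem_singleton.mp h1) ▸ h) ha.2
      calc (projz \ PDAux.VM M).card ≤ _ := Finset.card_le_card hprojz_sub
        _ ≤ ∑ e ∈ C \ M, (({e.1, e.2} : Finset (V z)) \ PDAux.VM M).card :=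
            Finset.card_biUnion_le
        _ ≤ ∑ _e ∈ C \ M, 1 := Finset.sum_le_sum hper
        _ = (C \ M).card := by rw [Finset.sum_const, smul_eq_mul, mul_one]
    have hXsub : X \ PDAux.VM M ⊆ projnz ∪ (projz \ PDAux.VM M) ∪ L c := by
      intro a ha
      rw [Finset.mem_sdiff] at ha
      rcases Finset.mem_union.mp ha.1 with hp | hl
      · obtain ⟨d, hd, rfl⟩ := Finset.mem_image.mp hp
        have hdD : d ∈ D := (Finset.mem_filter.mp hd).1
        have hcell : cellOf d = c := (Finset.mem_filter.mp hd).2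
        by_cases hsz : sig d = z
        · exact Finset.mem_union_left _ (Finset.mem_union_right _ (Finset.mem_sdiff.mpr
            ⟨Finset.mem_image_of_mem _ ((hDTzmem d).mpr ⟨hdD, hsz, hcell⟩), ha.2⟩))
        · exact Finset.mem_union_left _ (Finset.mem_union_left _
            (Finset.mem_image_of_mem _ ((hDTnzmem d).mpr ⟨hdD, hsz, hcell⟩)))
      · exact Finset.mem_union_right _ hl
    have hXcard : (X \ PDAux.VM M).card ≤ DTnz.card + (C \ M).card + (L c).card := by
      calc (X \ PDAux.VM M).card ≤ (projnz ∪ (projz \ PDAux.VM M) ∪ L c).card :=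
            Finset.card_le_card hXsub
        _ ≤ (projnz ∪ (projz \ PDAux.VM M)).card + (L c).card := Finset.card_union_le _ _
        _ ≤ projnz.card + (projz \ PDAux.VM M).card + (L c).card :=
            Nat.add_le_add_right (Finset.card_union_le _ _) _
        _ ≤ DTnz.card + (C \ M).card + (L c).card := by
            have h1 : projnz.card ≤ DTnz.card := Finset.card_image_le
            omega
    have hMcard : M.card + (C \ M).card = C.card := by
      rw [Finset.card_sdiff_of_subset hMC]
      have := Finset.card_le_card hMC
      omega
    calc pairedDomNum (A z) ≤ 2 * M.card + 2 * (X \ PDAux.VM M).card := hengine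
      _ ≤ 2 * M.card + 2 * (DTnz.card + (C \ M).card + (L c).card) := by omega
      _ = 2 * DTnz.card + 2 * (M.card + (C \ M).card) + 2 * (L c).card := by ring
      _ = 2 * DTnz.card + 2 * C.card + 2 * (L c).card := by rw [hMcard]
      _ ≤ 2 * DTnz.card + DTz.card + 2 * (L c).card := by omega
  have hctxOf_at : ∀ (i : Fin n) d, ctxOf i d = (nrm i (cellOf d), d z) := fun i d => by
    rw [hctxOfdef]
  -- Count 2 : per-context bound for the non-special factors
  have count2 : ∀ (i : Fin n), i ≠ z → ∀ (κ : ∀ j, V j) (v : V z),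
      2 * (fullSet i κ v).card ≤
      2 * ((D.filter (fun d => ¬ sig d = i)).filter (fun d => ctxOf i d = (κ, v))).card
      + ((D.filter (fun d => sig d = i)).filter (fun d => ctxOf i d = (κ, v))).card := by
    intro i hiz κ v
    set DC := D.filter (fun d => ctxOf i d = (κ, v)) with hDCd
    set DCi := (D.filter (fun d => sig d = i)).filter (fun d => ctxOf i d = (κ, v)) with hDCid
    set DCni := (D.filter (fun d => ¬ sig d = i)).filter (fun d => ctxOf i d = (κ, v))
      with hDCnid
    have hDCimem : ∀ d, d ∈ DCi ↔ d ∈ D ∧ sig d = i ∧ ctxOf i d = (κ, v) := by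
      intro d; simp only [hDCid, Finset.mem_filter]; tauto
    have hDCnimem : ∀ d, d ∈ DCni ↔ d ∈ D ∧ ¬ sig d = i ∧ ctxOf i d = (κ, v) := by
      intro d; simp only [hDCnid, Finset.mem_filter]; tauto
    set NF := (R i) \ fullSet i κ v with hNFd
    have hNFR : NF ⊆ R i := Finset.sdiff_subset
    set NFp : Finset (V i × V i) := NF.image (fun r => (r, muS i r)) with hNFpd
    have hNFgood : PDAux.GoodM (A i) NFp := by
      constructor
      · intro p hp
        obtain ⟨r, hr, rfl⟩ := Finset.mem_image.mp hp
        exact hmuS_adj i r (hR_sub i (hNFR hr))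
      · intro p hp q hq hpq
        obtain ⟨r, hr, rfl⟩ := Finset.mem_image.mp hp
        obtain ⟨r', hr', rfl⟩ := Finset.mem_image.mp hq
        have hrr : r ≠ r' := fun hc => hpq (by rw [hc])
        refine ⟨hrr, ?_, ?_, ?_⟩
        · intro hc
          have hc' : r = muS i r' := hc
          exact hmuR_not i r' (hNFR hr') (by rw [← hc']; exact hNFR hr)
        · intro hc
          have hc' : muS i r = r' := hc
          exact hmuR_not i r (hNFR hr) (by rw [hc']; exact hNFR hr')
        · intro hc
          have hc' : muS i r = muS i r' := hc
          exact hrr (by rw [← hmuS_invol i r (hR_sub i (hNFR hr)), hc',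
            hmuS_invol i r' (hR_sub i (hNFR hr'))])
    set pairord : (∀ j, V j) → V i × V i := fun d =>
      if gnum i (d i) < gnum i (mu d i) then (d i, mu d i) else (mu d i, d i) with hpairord
    set C : Finset (V i × V i) := DCi.image pairord with hCd
    have hend : ∀ d, d i ∈ ({(pairord d).1, (pairord d).2} : Finset (V i)) := by
      intro d
      by_cases hlt : gnum i (d i) < gnum i (mu d i)
      · simp only [hpairord, if_pos hlt]; exact Finset.mem_insert_self _ _
      · simp only [hpairord, if_neg hlt]
        exact Finset.mem_insert_of_mem (Finset.mem_singleton_self _)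
    have hCadj : ∀ e ∈ C, (A i).Adj e.1 e.2 := by
      intro e he
      obtain ⟨d, hd, rfl⟩ := Finset.mem_image.mp he
      obtain ⟨hdD, hsz, -⟩ := (hDCimem d).mp hd
      have hadj : (A i).Adj (d i) (mu d i) := by
        have := hsig_adj d hdD; rw [hsz] at this; exact this
      by_cases hlt : gnum i (d i) < gnum i (mu d i)
      · simp only [hpairord, if_pos hlt]; exact hadj
      · simp only [hpairord, if_neg hlt]; exact hadj.symm
    obtain ⟨M, hM, hM0, hMC, hMmax⟩ := PDAux.greedy (A i) C hCadj NFp hNFgood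
    set X : Finset (V i) := (DC.image (fun d => d i)) ∪ PDAux.VM NFp with hXd
    have hVMNFp : ∀ r ∈ NF, r ∈ PDAux.VM NFp ∧ muS i r ∈ PDAux.VM NFp := by
      intro r hr
      constructor
      · exact PDAux.mem_VM.mpr ⟨(r, muS i r), Finset.mem_image_of_mem _ hr, Or.inl rfl⟩
      · exact PDAux.mem_VM.mpr ⟨(r, muS i r), Finset.mem_image_of_mem _ hr, Or.inr rfl⟩
    have hXdom : IsDomSet (A i) X := by
      intro w hw
      have hrR : br i w ∈ R i := hbr_mem i w
      by_cases hfull : br i w ∈ fullSet i κ v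
      · obtain ⟨-, hcov⟩ := (hfullmem i κ v (br i w)).mp hfull
        obtain ⟨d, hdD, hctx, hadj⟩ := hcov w rfl
        exact ⟨d i, Finset.mem_union_left _
          (Finset.mem_image_of_mem _ (Finset.mem_filter.mpr ⟨hdD, hctx⟩)), hadj⟩
      · have hrNF : br i w ∈ NF := Finset.mem_sdiff.mpr ⟨hrR, hfull⟩
        rcases hbr_cov i w with h1 | h1 | h1 | h1
        · exact absurd (Finset.mem_union_right _ (h1 ▸ (hVMNFp _ hrNF).1)) hw
        · exact absurd (Finset.mem_union_right _ (h1 ▸ (hVMNFp _ hrNF).2)) hw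
        · exact ⟨br i w, Finset.mem_union_right _ (hVMNFp _ hrNF).1, h1⟩
        · exact ⟨muS i (br i w), Finset.mem_union_right _ (hVMNFp _ hrNF).2, h1⟩
    have hengine := PDAux.engine (A i) (hA i) X hXdom M hM
    have h2C : 2 * C.card ≤ DCi.card := by
      refine PDAux.two_mul_image_le DCi mu pairord ?_ ?_ ?_
      · intro d hd
        obtain ⟨hdD, hsz, hctx⟩ := (hDCimem d).mp hd
        refine (hDCimem (mu d)).mpr ⟨hmu_mem d hdD, ?_, ?_⟩
        · rw [hsig_mu d hdD, hsz]
        · rw [← hctx, hctxOf_at, hctxOf_at]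
          have hzz : mu d z = d z :=
            (hsig_eq d hdD z (by rw [hsz]; exact Ne.symm hiz)).symm
          rw [hzz]
          have hcell : nrm i (cellOf (mu d)) = nrm i (cellOf d) := by
            funext j
            by_cases hj : j = i
            · subst hj
              simp only [hnrmdef, Function.update_self]
            · simp only [hnrmdef, Function.update_of_ne hj]
              by_cases hjz : j = z
              · subst hjz; rw [hcellOf_at, hcellOf_at, if_pos rfl, if_pos rfl]
              · rw [hcellOf_at, hcellOf_at, if_neg hjz, if_neg hjz,
                  ← hsig_eq d hdD j (by rw [hsz]; exact hj)]
          rw [hcell]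
      · intro d hd; exact hmu_ne d ((hDCimem d).mp hd).1
      · intro d hd
        obtain ⟨hdD, hsz, -⟩ := (hDCimem d).mp hd
        have hinv := hmu_invol d hdD
        have hne : gnum i (d i) ≠ gnum i (mu d i) := by
          intro hc
          have hadj : (A i).Adj (d i) (mu d i) := by
            have := hsig_adj d hdD; rw [hsz] at this; exact this
          exact hadj.ne (hgnum_inj i hc)
        simp only [hpairord]
        rw [hinv]
        split_ifs with h1 h2 h3
        · exfalso; omega
        · rfl
        · rfl
        · exfalso; omega
    set proji : Finset (V i) := DCi.image (fun d => d i) with hprojid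
    set projni : Finset (V i) := DCni.image (fun d => d i) with hprojnid
    have hproji_sub : proji \ PDAux.VM M ⊆
        (C \ M).biUnion (fun e => ({e.1, e.2} : Finset (V i)) \ PDAux.VM M) := by
      intro a ha
      rw [Finset.mem_sdiff] at ha
      obtain ⟨haproj, haVM⟩ := ha
      obtain ⟨d, hd, rfl⟩ := Finset.mem_image.mp haproj
      have heC : pairord d ∈ C := Finset.mem_image_of_mem _ hd
      have heM : pairord d ∉ M := by
        intro hc
        refine haVM (PDAux.mem_VM.mpr ⟨pairord d, hc, ?_⟩)
        rcases Finset.mem_insert.mp (hend d) with h | h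
        · exact Or.inl h
        · exact Or.inr (Finset.mem_singleton.mp h)
      exact Finset.mem_biUnion.mpr ⟨pairord d, Finset.mem_sdiff.mpr ⟨heC, heM⟩,
        Finset.mem_sdiff.mpr ⟨hend d, haVM⟩⟩
    have hproji_card : (proji \ PDAux.VM M).card ≤ (C \ M).card := by
      have hper : ∀ e ∈ C \ M, (({e.1, e.2} : Finset (V i)) \ PDAux.VM M).card ≤ 1 := by
        intro e he
        rcases hMmax e (Finset.mem_sdiff.mp he).1 with h | h
        · refine le_trans (Finset.card_le_card (fun a ha => ?_)) (Finset.card_singleton e.2).le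
          rw [Finset.mem_sdiff] at ha
          rcases Finset.mem_insert.mp ha.1 with h1 | h1
          · exact absurd (h1 ▸ h) ha.2
          · exact h1
        · refine le_trans (Finset.card_le_card (fun a ha => ?_)) (Finset.card_singleton e.1).le
          rw [Finset.mem_sdiff] at ha
          rcases Finset.mem_insert.mp ha.1 with h1 | h1
          · exact Finset.mem_singleton.mpr h1
          · exact absurd ((Finset.mem_singleton.mp h1) ▸ h) ha.2
      calc (proji \ PDAux.VM M).card ≤ _ := Finset.card_le_card hproji_sub
        _ ≤ ∑ e ∈ C \ M, (({e.1, e.2} : Finset (V i)) \ PDAux.VM M).card :=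
            Finset.card_biUnion_le
        _ ≤ ∑ _e ∈ C \ M, 1 := Finset.sum_le_sum hper
        _ = (C \ M).card := by rw [Finset.sum_const, smul_eq_mul, mul_one]
    have hXsub : X \ PDAux.VM M ⊆ projni ∪ (proji \ PDAux.VM M) := by
      intro a ha
      rw [Finset.mem_sdiff] at ha
      rcases Finset.mem_union.mp ha.1 with hp | hl
      · obtain ⟨d, hd, rfl⟩ := Finset.mem_image.mp hp
        have hdD : d ∈ D := (Finset.mem_filter.mp hd).1
        have hctx : ctxOf i d = (κ, v) := (Finset.mem_filter.mp hd).2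
        by_cases hsz : sig d = i
        · exact Finset.mem_union_right _ (Finset.mem_sdiff.mpr
            ⟨Finset.mem_image_of_mem _ ((hDCimem d).mpr ⟨hdD, hsz, hctx⟩), ha.2⟩)
        · exact Finset.mem_union_left _
            (Finset.mem_image_of_mem _ ((hDCnimem d).mpr ⟨hdD, hsz, hctx⟩))
      · exact absurd (PDAux.VM_mono hM0 hl) ha.2
    have hXcard : (X \ PDAux.VM M).card ≤ DCni.card + (C \ M).card := by
      calc (X \ PDAux.VM M).card ≤ (projni ∪ (proji \ PDAux.VM M)).card :=
            Finset.card_le_card hXsub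
        _ ≤ projni.card + (proji \ PDAux.VM M).card := Finset.card_union_le _ _
        _ ≤ DCni.card + (C \ M).card := by
            have h1 : projni.card ≤ DCni.card := Finset.card_image_le
            omega
    have hMcard : M.card ≤ NF.card + (M \ NFp).card := by
      have h1 : NFp ∪ (M \ NFp) = M := Finset.union_sdiff_of_subset hM0
      have h2 : NFp.card = NF.card := Finset.card_image_of_injOn
        (fun a _ b _ h => congrArg Prod.fst h)
      calc M.card = (NFp ∪ (M \ NFp)).card := by rw [h1]
        _ ≤ NFp.card + (M \ NFp).card := Finset.card_union_le _ _
        _ = NF.card + (M \ NFp).card := by rw [h2]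
    have hdisjC : (M \ NFp).card + (C \ M).card ≤ C.card := by
      have hdj : Disjoint (M \ NFp) (C \ M) := by
        rw [Finset.disjoint_left]
        intro a haM haC
        exact (Finset.mem_sdiff.mp haC).2 (Finset.mem_sdiff.mp haM).1
      calc (M \ NFp).card + (C \ M).card = ((M \ NFp) ∪ (C \ M)).card :=
            (Finset.card_union_of_disjoint hdj).symm
        _ ≤ C.card := Finset.card_le_card (by
            intro a ha
            rcases Finset.mem_union.mp ha with h | h
            · exact hMC h
            · exact (Finset.mem_sdiff.mp h).1)
    have hRsplit : (R i).card = (fullSet i κ v).card + NF.card := by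
      have h1 : (fullSet i κ v) ⊆ R i := Finset.filter_subset _ _
      have h2 := Finset.card_sdiff_of_subset h1
      have h3 := Finset.card_le_card h1
      rw [← hNFd] at h2
      omega
    have hgam : pairedDomNum (A i) = 2 * ((fullSet i κ v).card + NF.card) := by
      rw [← hRsplit, ← hcard2 i, hScard i]
    omega
  -- Link lemma : each bad (cell, layer) pair is "full" in some coordinate
  have link : ∀ c ∈ cells, ∀ v : V z, v ∈ L c → ∃ i : Fin n, i ≠ z ∧
      c i ∈ fullSet i (nrm i c) v := by
    intro c hc v hvL
    rw [hLmem] at hvL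
    by_contra hcon
    push_neg at hcon
    rw [hcellsdef, Fintype.mem_piFinset] at hc
    have hcR : ∀ j : Fin n, j ≠ z → c j ∈ R j := by
      intro j hj
      have h1 := hc j
      rw [hRzdef] at h1
      simp only [if_neg hj] at h1
      exact h1
    have hcz : c z = pt z := by
      have h1 := hc z
      rw [hRzdef] at h1
      simp only [eq_self_iff_true, if_true] at h1
      exact Finset.mem_singleton.mp h1
    have hw : ∀ j : Fin n, j ≠ z → ∃ w : V j, br j w = c j ∧
        ¬ ∃ d ∈ D, ctxOf j d = (nrm j c, v) ∧ (A j).Adj (d j) w := by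
      intro j hj
      have hnot := hcon j hj
      rw [hfullmem] at hnot
      have hQ : ¬ ∀ w : V j, br j w = c j →
          ∃ d ∈ D, ctxOf j d = (nrm j c, v) ∧ (A j).Adj (d j) w :=
        fun hq => hnot ⟨hcR j hj, hq⟩
      obtain ⟨w, hwspec⟩ := not_forall.mp hQ
      obtain ⟨hw1, hw2⟩ := _root_.not_imp.mp hwspec
      exact ⟨w, hw1, hw2⟩
    choose wfun hw1 hw2 using hw
    set x : ∀ j, V j :=
      Function.update (fun j => if h : j = z then pt j else wfun j h) z v with hxdef
    have hx_z : x z = v := by rw [hxdef]; exact Function.update_self _ _ _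
    have hx_j : ∀ j : Fin n, ∀ hj : j ≠ z, x j = wfun j hj := by
      intro j hj
      rw [hxdef, Function.update_of_ne hj, dif_neg hj]
    have hcellx : cellOf x = c := by
      funext j
      by_cases hj : j = z
      · subst hj; rw [hcellOf_at, if_pos rfl, hcz]
      · rw [hcellOf_at, if_neg hj, hx_j j hj, hw1 j hj]
    have hxnD : x ∉ D := by
      intro hxD
      exact hvL ⟨x, hxD, hcellx, Or.inr hx_z⟩
    obtain ⟨d, hdD, hadjP⟩ := hD.1 x hxnD
    obtain ⟨i0, hadj0, heq0⟩ := (hPadj d x).mp hadjP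
    by_cases hi0z : i0 = z
    · rw [hi0z] at hadj0 heq0
      have hcelld : cellOf d = c := by
        funext j
        by_cases hj : j = z
        · subst hj; rw [hcellOf_at, if_pos rfl, hcz]
        · rw [hcellOf_at, if_neg hj, heq0 j hj, hx_j j hj, hw1 j hj]
      refine absurd ⟨d, hdD, hcelld, Or.inl ?_⟩ hvL
      rw [← hx_z]; exact hadj0
    · have hdz : d z = v := by
        rw [← hx_z]; exact heq0 z (fun h => hi0z h.symm)
      have hctx : ctxOf i0 d = (nrm i0 c, v) := by
        rw [hctxOf_at, hdz]
        have : nrm i0 (cellOf d) = nrm i0 c := by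
          funext j
          by_cases hj : j = i0
          · subst hj; simp only [hnrmdef, Function.update_self]
          · simp only [hnrmdef, Function.update_of_ne hj]
            by_cases hjz : j = z
            · subst hjz; rw [hcellOf_at, if_pos rfl, hcz]
            · rw [hcellOf_at, if_neg hjz, heq0 j hj, hx_j j hjz, hw1 j hjz]
        rw [this]
      refine hw2 i0 hi0z ⟨d, hdD, hctx, ?_⟩
      rw [← hx_j i0 hi0z]
      exact hadj0
  -- the set of bad (cell, layer) pairs
  set Bad : Finset ((∀ j, V j) × V z) := (cells ×ˢ Finset.univ).filter (fun p => p.2 ∈ L p.1)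
    with hBadd
  have hBadcard : ∑ c ∈ cells, (L c).card = Bad.card := by
    rw [hBadd, Finset.card_filter, Finset.sum_product]
    refine Finset.sum_congr rfl (fun c _ => ?_)
    have h1 : ∀ v : V z, ((c, v).2 ∈ L (c, v).1) = (v ∈ L c) := fun v => rfl
    simp only [h1]
    rw [← Finset.card_filter, Finset.filter_univ_mem]
  have hfz1 : ∑ c ∈ cells, ((D.filter (fun d => ¬ sig d = z)).filter
      (fun d => cellOf d = c)).card = (D.filter (fun d => ¬ sig d = z)).card :=
    (Finset.card_eq_sum_card_fiberwise (fun d _ => hcellOf_mem d)).symm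
  have hfz2 : ∑ c ∈ cells, ((D.filter (fun d => sig d = z)).filter
      (fun d => cellOf d = c)).card = (D.filter (fun d => sig d = z)).card :=
    (Finset.card_eq_sum_card_fiberwise (fun d _ => hcellOf_mem d)).symm
  have hsum1 : cells.card * pairedDomNum (A z) ≤
      2 * (D.filter (fun d => ¬ sig d = z)).card + (D.filter (fun d => sig d = z)).card
      + 2 * Bad.card := by
    calc cells.card * pairedDomNum (A z) = ∑ _c ∈ cells, pairedDomNum (A z) := by
          rw [Finset.sum_const, smul_eq_mul]
      _ ≤ ∑ c ∈ cells, (2 * ((D.filter (fun d => ¬ sig d = z)).filter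
            (fun d => cellOf d = c)).card
          + ((D.filter (fun d => sig d = z)).filter (fun d => cellOf d = c)).card
          + 2 * (L c).card) := Finset.sum_le_sum (fun c _ => count1 c)
      _ = 2 * (∑ c ∈ cells, ((D.filter (fun d => ¬ sig d = z)).filter
            (fun d => cellOf d = c)).card)
          + (∑ c ∈ cells, ((D.filter (fun d => sig d = z)).filter
            (fun d => cellOf d = c)).card)
          + 2 * (∑ c ∈ cells, (L c).card) := by
          rw [Finset.sum_add_distrib, Finset.sum_add_distrib, Finset.mul_sum, Finset.mul_sum]
      _ = _ := by rw [hfz1, hfz2, hBadcard]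
  -- per-coordinate bound on bad pairs
  set BadF : Fin n → Finset ((∀ j, V j) × V z) := fun i =>
    Bad.filter (fun p => p.1 i ∈ fullSet i (nrm i p.1) p.2) with hBadFd
  have hBadmem : ∀ p, p ∈ Bad ↔ (p.1 ∈ cells ∧ p.2 ∈ L p.1) := by
    intro p
    rw [hBadd, Finset.mem_filter, Finset.mem_product]
    simp only [Finset.mem_univ, and_true]
  have hBadle : Bad.card ≤ ∑ i ∈ Finset.univ.erase z, (BadF i).card := by
    have hsub : Bad ⊆ (Finset.univ.erase z).biUnion BadF := by
      intro p hp
      obtain ⟨hp1, hp2⟩ := (hBadmem p).mp hp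
      obtain ⟨i, hiz, hifull⟩ := link p.1 hp1 p.2 hp2
      exact Finset.mem_biUnion.mpr ⟨i, Finset.mem_erase.mpr ⟨hiz, Finset.mem_univ i⟩,
        Finset.mem_filter.mpr ⟨hp, hifull⟩⟩
    exact le_trans (Finset.card_le_card hsub) Finset.card_biUnion_le
  have hperI : ∀ i : Fin n, i ≠ z → 2 * (BadF i).card ≤
      2 * (D.filter (fun d => ¬ sig d = i)).card + (D.filter (fun d => sig d = i)).card := by
    intro i hiz
    have hBadIle : (BadF i).card ≤
        ∑ q ∈ cells ×ˢ (Finset.univ : Finset (V z)), (fullSet i q.1 q.2).card := by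
      have hmap : ∀ p ∈ BadF i, (nrm i p.1, p.2) ∈ cells ×ˢ (Finset.univ : Finset (V z)) := by
        intro p hp
        have hp1 : p.1 ∈ cells := ((hBadmem p).mp (Finset.mem_filter.mp hp).1).1
        exact Finset.mem_product.mpr ⟨hnrm_mem i p.1 hp1, Finset.mem_univ _⟩
      rw [Finset.card_eq_sum_card_fiberwise hmap]
      refine Finset.sum_le_sum (fun q _ => ?_)
      refine Finset.card_le_card_of_injOn (fun p => p.1 i) ?_ ?_
      · intro p hp
        simp only [Finset.mem_coe, Finset.mem_filter] at hp
        obtain ⟨hpBadI, hpq⟩ := hp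
        have hfull : p.1 i ∈ fullSet i (nrm i p.1) p.2 := (Finset.mem_filter.mp hpBadI).2
        rw [← hpq]
        exact hfull
      · intro p hp p' hp' heq
        simp only [Finset.coe_filter, Set.mem_setOf_eq] at hp hp'
        have hnn : (nrm i p.1, p.2) = (nrm i p'.1, p'.2) := hp.2.trans hp'.2.symm
        obtain ⟨hq1, hq2⟩ := Prod.mk.inj hnn
        have heq' : p.1 i = p'.1 i := heq
        have h1 : p.1 = p'.1 := by
          funext j
          by_cases hj : j = i
          · subst hj; exact heq'
          · rw [← hnrm_at i p.1 j hj, ← hnrm_at i p'.1 j hj]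
            exact congrFun hq1 j
        exact Prod.ext h1 hq2
    have hctxni : ∑ q ∈ cells ×ˢ (Finset.univ : Finset (V z)),
        ((D.filter (fun d => ¬ sig d = i)).filter (fun d => ctxOf i d = q)).card
        = (D.filter (fun d => ¬ sig d = i)).card :=
      (Finset.card_eq_sum_card_fiberwise (fun d _ => Finset.mem_product.mpr
        ⟨hnrm_mem i (cellOf d) (hcellOf_mem d), Finset.mem_univ _⟩)).symm
    have hctxi : ∑ q ∈ cells ×ˢ (Finset.univ : Finset (V z)),
        ((D.filter (fun d => sig d = i)).filter (fun d => ctxOf i d = q)).card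
        = (D.filter (fun d => sig d = i)).card :=
      (Finset.card_eq_sum_card_fiberwise (fun d _ => Finset.mem_product.mpr
        ⟨hnrm_mem i (cellOf d) (hcellOf_mem d), Finset.mem_univ _⟩)).symm
    calc 2 * (BadF i).card
        ≤ 2 * ∑ q ∈ cells ×ˢ (Finset.univ : Finset (V z)), (fullSet i q.1 q.2).card :=
          Nat.mul_le_mul_left 2 hBadIle
      _ = ∑ q ∈ cells ×ˢ (Finset.univ : Finset (V z)), 2 * (fullSet i q.1 q.2).card := by
          rw [Finset.mul_sum]
      _ ≤ ∑ q ∈ cells ×ˢ (Finset.univ : Finset (V z)),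
          (2 * ((D.filter (fun d => ¬ sig d = i)).filter (fun d => ctxOf i d = q)).card
          + ((D.filter (fun d => sig d = i)).filter (fun d => ctxOf i d = q)).card) :=
          Finset.sum_le_sum (fun q _ => count2 i hiz q.1 q.2)
      _ = 2 * (D.filter (fun d => ¬ sig d = i)).card
          + (D.filter (fun d => sig d = i)).card := by
          rw [Finset.sum_add_distrib, ← Finset.mul_sum, hctxni, hctxi]
  -- assemble the main counting inequality
  have hsig_part : ∀ i : Fin n, (D.filter (fun d => ¬ sig d = i)).card
      + (D.filter (fun d => sig d = i)).card = D.card := by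
    intro i
    rw [Nat.add_comm]
    exact Finset.card_filter_add_card_filter_not (p := fun d => sig d = i)
  have hsig_sum : ∑ i : Fin n, (D.filter (fun d => sig d = i)).card = D.card :=
    (Finset.card_eq_sum_card_fiberwise (fun d _ => Finset.mem_univ (sig d))).symm
  have hterm_sum : ∑ i : Fin n, (2 * (D.filter (fun d => ¬ sig d = i)).card
      + (D.filter (fun d => sig d = i)).card) + D.card = 2 * n * D.card := by
    have h1 : ∑ i : Fin n, (2 * (D.filter (fun d => ¬ sig d = i)).card
        + (D.filter (fun d => sig d = i)).card)
        + ∑ i : Fin n, (D.filter (fun d => sig d = i)).card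
        = ∑ i : Fin n, 2 * D.card := by
      rw [← Finset.sum_add_distrib]
      refine Finset.sum_congr rfl (fun i _ => ?_)
      have := hsig_part i
      omega
    rw [hsig_sum] at h1
    rw [h1, Finset.sum_const, Finset.card_univ, Fintype.card_fin, smul_eq_mul]
    ring
  have hmain : cells.card * pairedDomNum (A z) + D.card ≤ 2 * n * D.card := by
    have htot : cells.card * pairedDomNum (A z) ≤
        ∑ i : Fin n, (2 * (D.filter (fun d => ¬ sig d = i)).card
          + (D.filter (fun d => sig d = i)).card) := by
      have h2 : 2 * Bad.card ≤ ∑ i ∈ Finset.univ.erase z,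
          (2 * (D.filter (fun d => ¬ sig d = i)).card
            + (D.filter (fun d => sig d = i)).card) := by
        calc 2 * Bad.card ≤ 2 * ∑ i ∈ Finset.univ.erase z, (BadF i).card :=
              Nat.mul_le_mul_left 2 hBadle
          _ = ∑ i ∈ Finset.univ.erase z, 2 * (BadF i).card := Finset.mul_sum _ _ _
          _ ≤ _ := Finset.sum_le_sum (fun i hi => hperI i (Finset.mem_erase.mp hi).1)
      have h3 := Finset.add_sum_erase Finset.univ
        (fun i => 2 * (D.filter (fun d => ¬ sig d = i)).card
          + (D.filter (fun d => sig d = i)).card) (Finset.mem_univ z)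
      calc cells.card * pairedDomNum (A z)
          ≤ 2 * (D.filter (fun d => ¬ sig d = z)).card
            + (D.filter (fun d => sig d = z)).card + 2 * Bad.card := hsum1
        _ ≤ 2 * (D.filter (fun d => ¬ sig d = z)).card
            + (D.filter (fun d => sig d = z)).card
            + ∑ i ∈ Finset.univ.erase z, (2 * (D.filter (fun d => ¬ sig d = i)).card
              + (D.filter (fun d => sig d = i)).card) := Nat.add_le_add_left h2 _
        _ = ∑ i : Fin n, (2 * (D.filter (fun d => ¬ sig d = i)).card
              + (D.filter (fun d => sig d = i)).card) := h3
    calc cells.card * pairedDomNum (A z) + D.card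
        ≤ (∑ i : Fin n, (2 * (D.filter (fun d => ¬ sig d = i)).card
            + (D.filter (fun d => sig d = i)).card)) + D.card := Nat.add_le_add_right htot _
      _ = 2 * n * D.card := hterm_sum
  -- the product formula for the left-hand side
  have hcellscard : cells.card = ∏ j ∈ Finset.univ.erase z, (R j).card := by
    rw [hcellsdef, Fintype.card_piFinset]
    rw [← Finset.mul_prod_erase Finset.univ _ (Finset.mem_univ z)]
    have h1 : (Rz z).card = 1 := by
      rw [hRzdef]
      simp only [eq_self_iff_true, if_true]
      exact Finset.card_singleton _
    rw [h1, one_mul]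
    refine Finset.prod_congr rfl (fun j hj => ?_)
    rw [hRzdef]
    simp only [if_neg (Finset.mem_erase.mp hj).1]
  have hLHS : ∏ i, pairedDomNum (A i) = 2 ^ (n - 1) * cells.card * pairedDomNum (A z) := by
    rw [← Finset.mul_prod_erase Finset.univ _ (Finset.mem_univ z)]
    have h1 : ∏ j ∈ Finset.univ.erase z, pairedDomNum (A j)
        = ∏ j ∈ Finset.univ.erase z, 2 * (R j).card :=
      Finset.prod_congr rfl (fun j _ => by rw [← hScard j, hcard2 j])
    rw [h1, Finset.prod_mul_distrib, Finset.prod_const]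
    have hcarderase : (Finset.univ.erase z).card = n - 1 := by
      rw [Finset.card_erase_of_mem (Finset.mem_univ z), Finset.card_univ, Fintype.card_fin]
    rw [hcarderase, ← hcellscard]
    ring
  -- finish
  rw [hLHS, ← hDcard]
  have h2n1 : (2 * n - 1) * D.card + D.card = 2 * n * D.card := by
    have h1 : 2 * n - 1 + 1 = 2 * n := by omega
    calc (2 * n - 1) * D.card + D.card = (2 * n - 1 + 1) * D.card := by ring
      _ = 2 * n * D.card := by rw [h1]
  have hfin : cells.card * pairedDomNum (A z) ≤ (2 * n - 1) * D.card := by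
    have hx : cells.card * pairedDomNum (A z) ≤ 2 * n * D.card - D.card :=
      Nat.le_sub_of_add_le hmain
    have hy : (2 * n - 1) * D.card = 2 * n * D.card - D.card :=
      Nat.eq_sub_of_add_eq h2n1
    rw [hy]
    exact hx
  calc 2 ^ (n - 1) * cells.card * pairedDomNum (A z)
      = 2 ^ (n - 1) * (cells.card * pairedDomNum (A z)) := by ring
    _ ≤ 2 ^ (n - 1) * ((2 * n - 1) * D.card) := Nat.mul_le_mul_left _ hfin
    _ = 2 ^ (n - 1) * (2 * n - 1) * D.card := by ring
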